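/- Let 0 < α < 1, let F be α-SR with finite mean, and let r > 0 be a monopoly price of F, i.e. φ(r) = 0. Define the revenue function R̂(s) = s·(1−F(s)) and the posted-price welfare V(t) = t·(1−F(t)) + ∫_t^∞ (1−F(v)) dv. Then for every t ≥ 0, R̂(max{t, r}) ≥ α^{1/(1−α)} · V(t). -/

import Mathlib

open MeasureTheory Real Filter

/-- The virtual valuation function `φ(v) = v − (1 − F(v))/f(v)`. -/
noncomputable def virtualValue (F f : ℝ → ℝ) (v : ℝ) : ℝ := v - (1 - F v) / f v

/-- The hazard rate `h(v) = f(v)/(1 − F(v))`. -/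
noncomputable def hazardRate (F f : ℝ → ℝ) (v : ℝ) : ℝ := f v / (1 - F v)

/-- `F` is the CDF of a continuous distribution supported on `[0, ∞)`,
with density `f = F'` that is positive wherever `F < 1`. -/
structure IsCDF (F f : ℝ → ℝ) : Prop where
  zero : F 0 = 0
  mono : Monotone F
  le_one : ∀ v, F v ≤ 1
  tendsto_one : Tendsto F atTop (nhds 1)
  hasDeriv : ∀ v, 0 ≤ v → HasDerivAt F (f v) v
  f_pos : ∀ v, 0 ≤ v → F v < 1 → 0 < f v

/-- `F` is `α`-strongly regular: `φ(y) − φ(x) ≥ α (y − x)` for all `x < y` in the support. -/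
def IsAlphaSR (α : ℝ) (F f : ℝ → ℝ) : Prop :=
  ∀ x y, 0 ≤ x → x < y → F y < 1 →
    virtualValue F f y - virtualValue F f x ≥ α * (y - x)

lemma aux_pow {α : ℝ} (hα0 : 0 < α) (hα1 : α < 1) :
    α ^ (α / (1 - α) : ℝ) * (1 + α) ≤ 1 := by
  have h1a : (0:ℝ) < 1 + α := by linarith
  have h1 : Real.log (1 + α) ≤ α := by
    have := Real.log_le_sub_one_of_pos h1a; linarith
  have h2 : Real.log α ≤ α - 1 := by
    have := Real.log_le_sub_one_of_pos hα0; linarith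
  have h1α : (0:ℝ) < 1 - α := by linarith
  have hc : (0:ℝ) ≤ α / (1 - α) := by positivity
  have h3 : (α / (1 - α)) * Real.log α ≤ -α := by
    have := mul_le_mul_of_nonneg_left h2 hc
    have he : (α / (1 - α)) * (α - 1) = -α := by
      field_simp
      ring
    linarith
  calc α ^ (α / (1 - α) : ℝ) * (1 + α)
      = Real.exp ((α / (1 - α)) * Real.log α) * Real.exp (Real.log (1 + α)) := by
        rw [Real.rpow_def_of_pos hα0, Real.exp_log h1a, mul_comm (Real.log α)]
    _ = Real.exp ((α / (1 - α)) * Real.log α + Real.log (1 + α)) := (Real.exp_add _ _).symm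
    _ ≤ Real.exp 0 := by apply Real.exp_le_exp.2; linarith
    _ = 1 := Real.exp_zero

lemma aux_key2 {α r t : ℝ} (hα0 : 0 < α) (hα1 : α < 1) (hr : 0 < r) (ht : 0 ≤ t) :
    α ^ (1/(1-α) - 1 : ℝ) * (t + α*r) ≤
      r ^ (1 - 1/(1-α) : ℝ) * ((1-α)*t + α*r) ^ (1/(1-α) : ℝ) := by
  have h1α : (0:ℝ) < 1 - α := by linarith
  set β : ℝ := 1/(1-α) with hβdef
  have hβ1 : β * (1-α) = 1 := by rw [hβdef]; exact one_div_mul_cancel (ne_of_gt h1α)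
  have hβα : β * α = β - 1 := by rw [hβdef]; field_simp; ring
  have hu : (0:ℝ) < (1-α)*t + α*r := by positivity
  have har : (0:ℝ) < α * r := by positivity
  set u : ℝ := (1-α)*t + α*r with hudef
  have hAM := Real.geom_mean_le_arith_mean2_weighted (le_of_lt h1α) hα0.le
    (Real.rpow_nonneg hu.le β) (Real.rpow_nonneg har.le β) (by ring)
  have e1 : (u ^ β) ^ (1-α : ℝ) = u := by
    rw [← Real.rpow_mul hu.le, hβ1, Real.rpow_one]
  have e2 : ((α*r) ^ β) ^ (α : ℝ) = α ^ (β-1) * r ^ (β-1) := by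
    rw [← Real.rpow_mul har.le, hβα, Real.mul_rpow hα0.le hr.le]
  have e3 : (α*r) ^ β = α ^ β * r ^ β := Real.mul_rpow hα0.le hr.le
  rw [e1, e2, e3] at hAM
  have hC : (0:ℝ) < r ^ (1-β : ℝ) := Real.rpow_pos_of_pos hr _
  have hmul := mul_le_mul_of_nonneg_right hAM hC.le
  have er1 : r ^ (β-1 : ℝ) * r ^ (1-β : ℝ) = 1 := by
    rw [← Real.rpow_add hr]; norm_num
  have er2 : r ^ (β : ℝ) * r ^ (1-β : ℝ) = r := by
    rw [← Real.rpow_add hr]; norm_num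
  have eα : α ^ (β : ℝ) = α * α ^ (β-1 : ℝ) := by
    rw [show (β:ℝ) = 1 + (β-1) by ring, Real.rpow_add hα0, Real.rpow_one]; ring_nf
  have h : u * α ^ (β-1:ℝ) ≤ (1-α) * (u^β * r^(1-β:ℝ)) + α * (α * α^(β-1:ℝ)) * r := by
    calc u * α ^ (β-1:ℝ) = u * (α^(β-1:ℝ) * r^(β-1:ℝ)) * r^(1-β:ℝ) := by
          rw [show u * (α^(β-1:ℝ) * r^(β-1:ℝ)) * r^(1-β:ℝ)
            = u * α^(β-1:ℝ) * (r^(β-1:ℝ) * r^(1-β:ℝ)) by ring, er1, mul_one]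
      _ ≤ ((1-α) * u^β + α * (α^β * r^β)) * r^(1-β:ℝ) := hmul
      _ = (1-α) * (u^β * r^(1-β:ℝ)) + α * (α^β) * (r^β * r^(1-β:ℝ)) := by ring
      _ = (1-α) * (u^β * r^(1-β:ℝ)) + α * (α * α^(β-1:ℝ)) * r := by rw [er2, eα]
  have hA : (0:ℝ) < α ^ (β-1:ℝ) := Real.rpow_pos_of_pos hα0 _
  nlinarith [h, hu, hA, Real.rpow_pos_of_pos hu β, hC,
    mul_pos (Real.rpow_pos_of_pos hu β) hC]

theorem revenue_vs_welfare (α : ℝ) (F f : ℝ → ℝ)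
    (hα0 : 0 < α) (hα1 : α < 1)
    (hcdf : IsCDF F f) (hSR : IsAlphaSR α F f)
    (hmean : IntegrableOn (fun v => 1 - F v) (Set.Ioi 0))
    (r : ℝ) (hr : 0 < r) (hmon : virtualValue F f r = 0)
    (t : ℝ) (ht : 0 ≤ t) :
    max t r * (1 - F (max t r)) ≥
      α ^ (1 / (1 - α) : ℝ) * (t * (1 - F t) + ∫ v in Set.Ioi t, (1 - F v)) := by
  have h1α : (0:ℝ) < 1 - α := by linarith
  set β : ℝ := 1/(1-α) with hβdef
  have hβ1 : (1-α) * β = 1 := by rw [hβdef]; field_simp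
  have hβgt : 1 < β := by
    rw [hβdef, lt_div_iff₀ h1α]; linarith
  -- monopoly price facts
  have hFr : F r < 1 := by
    rcases lt_or_ge (F r) 1 with h | h
    · exact h
    · exfalso
      have hFr1 : F r = 1 := le_antisymm (hcdf.le_one r) h
      unfold virtualValue at hmon
      rw [hFr1] at hmon
      simp at hmon
      linarith
  -- the linear comparison function L
  set L : ℝ → ℝ := fun v => (1-α)*v + α*r with hLdef
  have hLpos : ∀ v, 0 ≤ v → 0 < L v := by
    intro v hv
    have h1 : 0 ≤ (1-α)*v := mul_nonneg h1α.le hv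
    have h2 : 0 < α*r := mul_pos hα0 hr
    simp only [hLdef]; linarith
  have hLr : L r = r := by simp only [hLdef]; ring
  set W : ℝ → ℝ := fun v => (1 - F v) * (L v) ^ (β:ℝ) with hWdef
  have hq0 : ∀ v, 0 ≤ 1 - F v := fun v => by linarith [hcdf.le_one v]
  have hW0 : ∀ v, 0 ≤ v → 0 ≤ W v := fun v hv =>
    mul_nonneg (hq0 v) (Real.rpow_nonneg (hLpos v hv).le _)
  have hLder : ∀ v : ℝ, HasDerivAt L (1-α) v := by
    intro v
    rw [hLdef]
    simpa using ((hasDerivAt_id v).const_mul (1-α)).add_const (α*r)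
  have hWder : ∀ v, 0 ≤ v →
      HasDerivAt W ((L v)^(β-1:ℝ) * ((1 - F v) - f v * L v)) v := by
    intro v hv
    have hLp := hLpos v hv
    have h1 : HasDerivAt (fun w => (L w) ^ (β:ℝ)) ((1-α) * β * (L v)^(β-1:ℝ)) v :=
      (hLder v).rpow_const (Or.inl (ne_of_gt hLp))
    have h2 : HasDerivAt (fun w => 1 - F w) (-(f v)) v := (hcdf.hasDeriv v hv).const_sub 1
    have h3 := h2.mul h1
    have h4 : HasDerivAt W
        (-(f v) * (L v)^(β:ℝ) + (1 - F v) * ((1-α) * β * (L v)^(β-1:ℝ))) v := h3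
    convert h4 using 1
    have hLL : (L v)^(β:ℝ) = (L v)^(β-1:ℝ) * L v := by
      rw [show (β:ℝ) = (β-1)+1 by ring, Real.rpow_add hLp, Real.rpow_one]; ring_nf
    rw [hLL]
    linear_combination (-(1 - F v)) * (L v)^(β-1:ℝ) * hβ1
  -- sign of the derivative below and above r
  have hderiv_nonneg : ∀ u, 0 < u → u < r →
      0 ≤ (L u)^(β-1:ℝ) * ((1 - F u) - f u * L u) := by
    intro u hu hur
    have hFu : F u < 1 := lt_of_le_of_lt (hcdf.mono hur.le) hFr
    have hfu : 0 < f u := hcdf.f_pos u hu.le hFu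
    have hsr := hSR u r hu.le hur hFr
    unfold virtualValue at hsr hmon
    have hdiv : L u ≤ (1 - F u) / f u := by
      simp only [hLdef]; nlinarith [hsr, hmon]
    have := (le_div_iff₀ hfu).1 hdiv
    apply mul_nonneg (Real.rpow_nonneg (hLpos u hu.le).le _)
    nlinarith [this]
  have hderiv_nonpos : ∀ u, r < u → F u < 1 →
      (L u)^(β-1:ℝ) * ((1 - F u) - f u * L u) ≤ 0 := by
    intro u hru hFu
    have hu0 : 0 < u := lt_trans hr hru
    have hfu : 0 < f u := hcdf.f_pos u hu0.le hFu
    have hsr := hSR r u hr.le hru hFu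
    unfold virtualValue at hsr hmon
    have hdiv : (1 - F u) / f u ≤ L u := by
      simp only [hLdef]; nlinarith [hsr, hmon]
    have := (div_le_iff₀ hfu).1 hdiv
    apply mul_nonpos_of_nonneg_of_nonpos (Real.rpow_nonneg (hLpos u hu0.le).le _)
    nlinarith [this]
  -- W is monotone on [0, r]
  have keyA : ∀ v ∈ Set.Icc (0:ℝ) r, W v ≤ W r := by
    intro v hv
    have hmono : MonotoneOn W (Set.Icc 0 r) := by
      apply monotoneOn_of_deriv_nonneg (convex_Icc 0 r)
      · intro x hx
        exact ((hWder x hx.1).continuousAt).continuousWithinAt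
      · intro x hx
        rw [interior_Icc] at hx
        exact ((hWder x hx.1.le).differentiableAt).differentiableWithinAt
      · intro x hx
        rw [interior_Icc] at hx
        rw [(hWder x hx.1.le).deriv]
        exact hderiv_nonneg x hx.1 hx.2
    exact hmono hv (Set.mem_Icc.2 ⟨hr.le, le_rfl⟩) hv.2
  -- W is antitone on [p, ∞) for r ≤ p
  have keyB : ∀ p v, r ≤ p → p ≤ v → W v ≤ W p := by
    intro p v hrp hpv
    rcases lt_or_ge (F v) 1 with hFv | hFv
    · have hanti : AntitoneOn W (Set.Icc p v) := by
        apply antitoneOn_of_deriv_nonpos (convex_Icc p v)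
        · intro x hx
          exact ((hWder x (le_trans (le_trans hr.le hrp) hx.1)).continuousAt).continuousWithinAt
        · intro x hx
          rw [interior_Icc] at hx
          exact ((hWder x (le_trans (le_trans hr.le hrp) hx.1.le)).differentiableAt).differentiableWithinAt
        · intro x hx
          rw [interior_Icc] at hx
          rw [(hWder x (le_trans (le_trans hr.le hrp) hx.1.le)).deriv]
          exact hderiv_nonpos x (lt_of_le_of_lt hrp hx.1)
            (lt_of_le_of_lt (hcdf.mono hx.2.le) hFv)
      exact hanti (Set.mem_Icc.2 ⟨le_rfl, hpv⟩) (Set.mem_Icc.2 ⟨hpv, le_rfl⟩) hpv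
    · have hFv1 : F v = 1 := le_antisymm (hcdf.le_one v) hFv
      have hWv : W v = 0 := by simp [hWdef, hFv1]
      rw [hWv]
      exact hW0 p (le_trans hr.le hrp)
  set s : ℝ := max t r with hsdef
  have hs0 : 0 < s := lt_of_lt_of_le hr (le_max_right t r)
  have key : ∀ v, t ≤ v → W v ≤ W s := by
    intro v hv
    rcases le_total r t with h | h
    · have hst : s = t := max_eq_left h
      rw [hst]; exact keyB t v h hv
    · have hsr : s = r := max_eq_right h
      rw [hsr]
      rcases le_total v r with h2 | h2
      · exact keyA v (Set.mem_Icc.2 ⟨le_trans ht hv, h2⟩)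
      · exact keyB r v le_rfl h2
  -- integral of L^(-β) over (t, ∞)
  set g : ℝ → ℝ := fun v => -(1/α) * (L v)^(1-β:ℝ) with hgdef
  have hgder : ∀ x, 0 ≤ x → HasDerivAt g ((L x)^(-β:ℝ)) x := by
    intro x hx
    have hLp := hLpos x hx
    have h1 : HasDerivAt (fun w => (L w)^(1-β:ℝ)) ((1-α) * (1-β) * (L x)^(1-β-1:ℝ)) x :=
      (hLder x).rpow_const (Or.inl (ne_of_gt hLp))
    have h2 := h1.const_mul (-(1/α))
    have h3 : ((-(1:ℝ)/α)) * ((1-α) * (1-β)) = 1 := by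
      have h4 : (1-α) * (1-β) = -α := by linear_combination -hβ1
      rw [h4]; field_simp
    have h5 : (1-β-1:ℝ) = -β := by ring
    rw [hgdef]
    refine h2.congr_deriv ?_
    symm
    rw [h5]
    linear_combination ((L x)^(-β:ℝ)) * h3.symm
  have hgcont : ContinuousWithinAt g (Set.Ici t) t :=
    ((hgder t ht).continuousAt).continuousWithinAt
  have hgtend : Tendsto g atTop (nhds 0) := by
    have hLtop : Tendsto L atTop atTop := by
      rw [hLdef]
      apply Filter.tendsto_atTop_add_const_right
      exact Filter.Tendsto.const_mul_atTop h1α tendsto_id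
    have h2 : Tendsto (fun x:ℝ => x^(1-β:ℝ)) atTop (nhds 0) := by
      rw [show (1-β:ℝ) = -(β-1) by ring]
      exact tendsto_rpow_neg_atTop (by linarith)
    have h3 := (h2.comp hLtop).const_mul (-(1/α))
    simpa [hgdef] using h3
  have hgder' : ∀ x ∈ Set.Ioi t, HasDerivAt g ((L x)^(-β:ℝ)) x :=
    fun x hx => hgder x (le_trans ht (le_of_lt hx))
  have hgpos : ∀ x ∈ Set.Ioi t, 0 ≤ (L x)^(-β:ℝ) :=
    fun x hx => Real.rpow_nonneg (hLpos x (le_trans ht (le_of_lt hx))).le _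
  have hJint : IntegrableOn (fun v => (L v)^(-β:ℝ)) (Set.Ioi t) :=
    integrableOn_Ioi_deriv_of_nonneg hgcont hgder' hgpos hgtend
  have hJval : ∫ v in Set.Ioi t, (L v)^(-β:ℝ) = (1/α) * (L t)^(1-β:ℝ) := by
    rw [integral_Ioi_of_hasDerivAt_of_nonneg hgcont hgder' hgpos hgtend]
    simp only [hgdef]
    ring
  -- pointwise bound
  have hWL : ∀ v, 0 ≤ v → 1 - F v = W v * (L v)^(-β:ℝ) := by
    intro v hv
    have hLp := hLpos v hv
    rw [hWdef]
    simp only []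
    rw [mul_assoc, ← Real.rpow_add hLp, add_neg_cancel, Real.rpow_zero, mul_one]
  have hpt : ∀ v ∈ Set.Ioi t, 1 - F v ≤ W s * (L v)^(-β:ℝ) := by
    intro v hv
    have hv0 : 0 ≤ v := le_trans ht (le_of_lt hv)
    rw [hWL v hv0]
    exact mul_le_mul_of_nonneg_right (key v (le_of_lt hv))
      (Real.rpow_nonneg (hLpos v hv0).le _)
  have hqint : IntegrableOn (fun v => 1 - F v) (Set.Ioi t) :=
    hmean.mono_set (Set.Ioi_subset_Ioi ht)
  have hWsint : IntegrableOn (fun v => W s * (L v)^(-β:ℝ)) (Set.Ioi t) :=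
    hJint.const_mul _
  have hInt : ∫ v in Set.Ioi t, (1 - F v) ≤ W s * ((1/α) * (L t)^(1-β:ℝ)) := by
    calc ∫ v in Set.Ioi t, (1 - F v)
        ≤ ∫ v in Set.Ioi t, W s * (L v)^(-β:ℝ) :=
          setIntegral_mono_on hqint hWsint measurableSet_Ioi hpt
      _ = W s * ∫ v in Set.Ioi t, (L v)^(-β:ℝ) := integral_const_mul _ _
      _ = W s * ((1/α) * (L t)^(1-β:ℝ)) := by rw [hJval]
  have hhead : t * (1 - F t) ≤ t * (W s * (L t)^(-β:ℝ)) := by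
    apply mul_le_mul_of_nonneg_left _ ht
    rw [hWL t ht]
    exact mul_le_mul_of_nonneg_right (key t le_rfl)
      (Real.rpow_nonneg (hLpos t ht).le _)
  -- the scalar inequality
  have hLt := hLpos t ht
  have hsplit : (L t)^(1-β:ℝ) = L t * (L t)^(-β:ℝ) := by
    rw [show (1-β:ℝ) = 1 + (-β) by ring, Real.rpow_add hLt, Real.rpow_one]
  have eα : α ^ (β : ℝ) = α * α ^ (β-1 : ℝ) := by
    rw [show (β:ℝ) = 1 + (β-1) by ring, Real.rpow_add hα0, Real.rpow_one]; ring_nf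
  have hLHS : α^(β:ℝ) * (t * (L t)^(-β:ℝ) + (1/α) * (L t)^(1-β:ℝ))
      = α^(β-1:ℝ) * (t + α*r) * (L t)^(-β:ℝ) := by
    rw [hsplit, eα]
    simp only [hLdef]
    field_simp
    ring
  have hscal : α^(β:ℝ) * (t * (L t)^(-β:ℝ) + (1/α) * (L t)^(1-β:ℝ))
      ≤ s * (L s)^(-β:ℝ) := by
    rw [hLHS]
    rcases le_total t r with htr | hrt
    · have hsr : s = r := max_eq_right htr
      rw [hsr, hLr]
      have hk := aux_key2 hα0 hα1 hr ht
      rw [← hβdef] at hk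
      have hk2 := mul_le_mul_of_nonneg_right hk (Real.rpow_nonneg hLt.le (-β))
      calc α^(β-1:ℝ) * (t + α*r) * (L t)^(-β:ℝ)
          ≤ r ^ (1-β:ℝ) * ((1-α)*t + α*r) ^ (β:ℝ) * (L t)^(-β:ℝ) := hk2
        _ = r ^ (1-β:ℝ) * ((L t) ^ (β:ℝ) * (L t)^(-β:ℝ)) := by
            simp only [hLdef]; ring
        _ = r ^ (1-β:ℝ) := by
            rw [← Real.rpow_add hLt, add_neg_cancel, Real.rpow_zero, mul_one]
        _ = r * r^(-β:ℝ) := by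
            rw [show (1-β:ℝ) = 1 + (-β) by ring, Real.rpow_add hr, Real.rpow_one]
    · have hst : s = t := max_eq_left hrt
      rw [hst]
      apply mul_le_mul_of_nonneg_right _ (Real.rpow_nonneg hLt.le _)
      have hA1 : α^(β-1:ℝ) * (1+α) ≤ 1 := by
        rw [show (β-1:ℝ) = α/(1-α) by rw [hβdef]; field_simp; ring]
        exact aux_pow hα0 hα1
      have hApos : (0:ℝ) < α^(β-1:ℝ) := Real.rpow_pos_of_pos hα0 _
      nlinarith [mul_le_mul_of_nonneg_left (show α*r ≤ α*t from by nlinarith) hApos.le,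
        mul_le_mul_of_nonneg_right hA1 ht]
  -- final assembly
  have hαβpos : (0:ℝ) < α^(β:ℝ) := Real.rpow_pos_of_pos hα0 _
  have final : α^(β:ℝ) * (t * (1 - F t) + ∫ v in Set.Ioi t, (1 - F v))
      ≤ s * (1 - F s) := by
    calc α^(β:ℝ) * (t * (1 - F t) + ∫ v in Set.Ioi t, (1 - F v))
        ≤ α^(β:ℝ) * (t * (W s * (L t)^(-β:ℝ)) + W s * ((1/α) * (L t)^(1-β:ℝ))) := by
          apply mul_le_mul_of_nonneg_left _ hαβpos.le
          linarith [hhead, hInt]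
      _ = W s * (α^(β:ℝ) * (t * (L t)^(-β:ℝ) + (1/α) * (L t)^(1-β:ℝ))) := by ring
      _ ≤ W s * (s * (L s)^(-β:ℝ)) := mul_le_mul_of_nonneg_left hscal (hW0 s hs0.le)
      _ = s * (1 - F s) := by rw [hWL s hs0.le]; ring
  exact final
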